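/- Let X be a Banach space, L : X → X a continuous linear operator, Q₁, Q₂ dense subspaces of X, and Z : Q₁ → Q₁ a map such that: (i) L(Z y) = y for all y ∈ Q₁; (ii) Zⁿ y → 0 as n → ∞ for all y ∈ Q₁; (iii) Lⁿ x → 0 as n → ∞ for all x ∈ Q₂. If X is separable and infinite-dimensional (a Baire, second-countable space), then L is hypercyclic: there exists x ∈ X whose orbit {Lⁿ x : n ∈ ℕ} is dense in X. -/

import Mathlib

open Filter Topology

theorem godefroy_shapiro_criterion
    (X : Type*) [NormedAddCommGroup X] [NormedSpace ℂ X] [CompleteSpace X]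
    [TopologicalSpace.SeparableSpace X]
    (hinf : ¬ FiniteDimensional ℂ X)
    (L : X →L[ℂ] X)
    (Q₁ Q₂ : Submodule ℂ X)
    (hQ₁ : Dense (Q₁ : Set X)) (hQ₂ : Dense (Q₂ : Set X))
    (Z : X → X) (hZmaps : ∀ y ∈ Q₁, Z y ∈ Q₁)
    (hLZ : ∀ y ∈ Q₁, L (Z y) = y)
    (hZlim : ∀ y ∈ Q₁, Filter.Tendsto (fun n : ℕ => Z^[n] y) Filter.atTop (nhds 0))
    (hLlim : ∀ x ∈ Q₂, Filter.Tendsto (fun n : ℕ => (⇑L)^[n] x) Filter.atTop (nhds 0)) :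
    ∃ x : X, Dense (Set.range fun n : ℕ => (⇑L)^[n] x) := by
  -- Z^[n] maps Q₁ to Q₁
  have hZn : ∀ n : ℕ, ∀ y ∈ Q₁, Z^[n] y ∈ Q₁ := by
    intro n
    induction n with
    | zero => intro y hy; simpa using hy
    | succ n ih =>
      intro y hy
      rw [Function.iterate_succ_apply']
      exact hZmaps _ (ih y hy)
  -- L^[n] (Z^[n] y) = y
  have hLZn : ∀ n : ℕ, ∀ y ∈ Q₁, (⇑L)^[n] (Z^[n] y) = y := by
    intro n
    induction n with
    | zero => intro y _; simp
    | succ n ih =>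
      intro y hy
      rw [Function.iterate_succ_apply' (f := Z), Function.iterate_succ_apply (f := ⇑L),
        hLZ _ (hZn n y hy)]
      exact ih y hy
  -- topological transitivity
  have htrans : ∀ U V : Set X, IsOpen U → IsOpen V → U.Nonempty → V.Nonempty →
      ∃ n : ℕ, ∃ u ∈ U, (⇑L)^[n] u ∈ V := by
    intro U V hU hV hUne hVne
    obtain ⟨x, hxU, hxQ⟩ := hQ₂.inter_open_nonempty U hU hUne
    obtain ⟨y, hyV, hyQ⟩ := hQ₁.inter_open_nonempty V hV hVne
    have h1 : Tendsto (fun n : ℕ => x + Z^[n] y) atTop (𝓝 x) := by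
      simpa using (tendsto_const_nhds (x := x)).add (hZlim y hyQ)
    have h2 : Tendsto (fun n : ℕ => (⇑L)^[n] (x + Z^[n] y)) atTop (𝓝 y) := by
      have heq : ∀ n : ℕ, (⇑L)^[n] (x + Z^[n] y) = (⇑L)^[n] x + y := by
        intro n
        have : (⇑L)^[n] = ⇑(L ^ n) := by
          rw [FunLike.coe_pow_eq_iterate]
        rw [this, map_add, ← this, hLZn n y hyQ]
      simp only [heq]
      simpa using (hLlim x hxQ).add (tendsto_const_nhds (x := y))
    have hA : ∀ᶠ n in atTop, x + Z^[n] y ∈ U := h1.eventually (hU.mem_nhds hxU)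
    have hB : ∀ᶠ n in atTop, (⇑L)^[n] (x + Z^[n] y) ∈ V := h2.eventually (hV.mem_nhds hyV)
    obtain ⟨n, hn1, hn2⟩ := (hA.and hB).exists
    exact ⟨n, x + Z^[n] y, hn1, hn2⟩
  -- countable basis
  obtain ⟨b, hbc, -, hbasis⟩ := TopologicalSpace.exists_countable_basis X
  set ι := {B : Set X // B ∈ b ∧ B.Nonempty}
  have : Countable ι := (hbc.mono (Set.sep_subset _ _)).to_subtype
  set G : ι → Set X := fun B => ⋃ n : ℕ, (⇑L)^[n] ⁻¹' B.1 with hG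
  have hGopen : ∀ B : ι, IsOpen (G B) :=
    fun B => isOpen_iUnion fun n =>
      (hbasis.isOpen B.2.1).preimage ((L : X →L[ℂ] X).continuous.iterate n)
  have hGdense : ∀ B : ι, Dense (G B) := by
    intro B
    rw [dense_iff_inter_open]
    intro U hU hUne
    obtain ⟨n, u, huU, huB⟩ := htrans U B.1 hU (hbasis.isOpen B.2.1) hUne B.2.2
    exact ⟨u, huU, Set.mem_iUnion.2 ⟨n, huB⟩⟩
  have hD : Dense (⋂ B : ι, G B) := dense_iInter_of_isOpen hGopen hGdense
  obtain ⟨x, hx⟩ := hD.nonempty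
  refine ⟨x, ?_⟩
  rw [dense_iff_inter_open]
  intro U hU hUne
  obtain ⟨u, huU⟩ := hUne
  obtain ⟨B, hBb, huB, hBU⟩ := hbasis.exists_subset_of_mem_open huU hU
  have hxB : x ∈ G ⟨B, hBb, ⟨u, huB⟩⟩ := Set.mem_iInter.1 hx _
  obtain ⟨n, hn⟩ := Set.mem_iUnion.1 hxB
  exact ⟨(⇑L)^[n] x, hBU hn, ⟨n, rfl⟩⟩
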